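/- For any integer l ≥ 0 and any complex-valued harmonic homogeneous polynomial H of degree l on ℝ³, the function u(x) := ( J_{2l+1}(√(8|x|)) / (√(8|x|) |x|^l) ) H(x) satisfies Δu + (2/|x|) u = 0 on ℝ³ \ {0} and extends continuously to all of ℝ³. -/

import Mathlib

open MeasureTheory Metric Set
open scoped ContDiff

noncomputable section

abbrev R3 := EuclideanSpace ℝ (Fin 3)

/-- The Laplacian on ℝ³, as the sum of the second partial derivatives. -/
def lap {F : Type*} [NormedAddCommGroup F] [NormedSpace ℝ F] (f : R3 → F) (x : R3) : F :=
  ∑ i : Fin 3, fderiv ℝ (fun y => fderiv ℝ f y (EuclideanSpace.single i 1)) x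
    (EuclideanSpace.single i 1)

/-- The Bessel function of the first kind of integer order `ν`. -/
def besselJ (ν : ℕ) (x : ℝ) : ℝ :=
  ∑' j : ℕ, (-1 : ℝ) ^ j / ((Nat.factorial j) * (Nat.factorial (j + ν))) * (x / 2) ^ (2 * j + ν)

namespace BA

/-- ratio condition on coefficients -/
def Good (b : ℕ → ℝ) : Prop := ∀ j : ℕ, |b (j+1)| ≤ 2 * |b j| / ((j : ℝ) + 1)

/-- coefficients of termwise derivative -/
def sh (b : ℕ → ℝ) : ℕ → ℝ := fun j => ((j : ℝ) + 1) * b (j+1)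

lemma abs_sh (b : ℕ → ℝ) (j : ℕ) : |sh b j| = ((j : ℝ) + 1) * |b (j+1)| := by
  rw [sh, abs_mul, abs_of_nonneg (by positivity)]

lemma Good.sh_good {b : ℕ → ℝ} (hb : Good b) : Good (BA.sh b) := by
  intro j
  have h := hb (j+1)
  push_cast at h
  rw [abs_sh, abs_sh]
  push_cast
  have h2 : ((j:ℝ)+1+1) * |b (j+1+1)| ≤ ((j:ℝ)+1+1) * (2 * |b (j+1)| / ((j:ℝ)+1+1)) := by
    apply mul_le_mul_of_nonneg_left h (by positivity)
  calc ((j:ℝ)+1+1) * |b (j+1+1)| ≤ ((j:ℝ)+1+1) * (2 * |b (j+1)| / ((j:ℝ)+1+1)) := h2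
    _ = 2 * (((j:ℝ)+1) * |b (j+1)|) / ((j:ℝ)+1) := by
        field_simp

lemma Good.bound {b : ℕ → ℝ} (hb : Good b) (j : ℕ) :
    |b j| ≤ |b 0| * 2 ^ j / (j.factorial : ℝ) := by
  induction j with
  | zero => simp
  | succ n ih =>
    calc |b (n+1)| ≤ 2 * |b n| / ((n:ℝ)+1) := hb n
      _ ≤ 2 * (|b 0| * 2 ^ n / (n.factorial : ℝ)) / ((n:ℝ)+1) := by gcongr
      _ = |b 0| * 2 ^ (n+1) / ((n+1).factorial : ℝ) := by
          rw [Nat.factorial_succ]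
          have h1 : ((n.factorial : ℝ)) ≠ 0 := Nat.cast_ne_zero.mpr n.factorial_ne_zero
          push_cast
          field_simp
          ring

lemma Good.summable_abs {b : ℕ → ℝ} (hb : Good b) {R : ℝ} (hR : 0 ≤ R) :
    Summable (fun j => |b j| * R ^ j) := by
  have hs : Summable (fun j : ℕ => |b 0| * ((2*R) ^ j / (j.factorial : ℝ))) :=
    (Real.summable_pow_div_factorial (2*R)).mul_left _
  refine Summable.of_nonneg_of_le (fun j => by positivity) (fun j => ?_) hs
  have h1 : |b j| * R ^ j ≤ (|b 0| * 2 ^ j / (j.factorial : ℝ)) * R ^ j :=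
    mul_le_mul_of_nonneg_right (hb.bound j) (by positivity)
  have h2 : (|b 0| * 2 ^ j / (j.factorial : ℝ)) * R ^ j
      = |b 0| * ((2*R) ^ j / (j.factorial : ℝ)) := by rw [mul_pow]; ring
  linarith

lemma Good.summable {b : ℕ → ℝ} (hb : Good b) (y : ℝ) :
    Summable (fun j => b j * y ^ j) := by
  apply Summable.of_norm_bounded (hb.summable_abs (abs_nonneg y))
  intro j
  rw [Real.norm_eq_abs, abs_mul, abs_pow]

lemma Good.summable_deriv_aux {b : ℕ → ℝ} (hb : Good b) {R : ℝ} (hR : 0 ≤ R) :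
    Summable (fun j : ℕ => |b j| * ((j : ℝ) * R ^ (j-1))) := by
  apply (summable_nat_add_iff 1).mp
  have : (fun n : ℕ => |b (n+1)| * (((n+1 : ℕ) : ℝ) * R ^ ((n+1)-1)))
      = fun n : ℕ => |sh b n| * R ^ n := by
    funext n
    rw [abs_sh]
    push_cast
    ring
  rw [this]
  exact hb.sh_good.summable_abs hR

lemma Good.hasDerivAt {b : ℕ → ℝ} (hb : Good b) (y : ℝ) :
    HasDerivAt (fun z => ∑' j, b j * z ^ j) (∑' j, sh b j * y ^ j) y := by
  set R := |y| + 1 with hRdef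
  have hR0 : (0:ℝ) ≤ R := by positivity
  have hmem : y ∈ ball (0:ℝ) R := by
    simp only [mem_ball, dist_zero_right, Real.norm_eq_abs, hRdef]
    linarith
  have key : HasDerivAt (fun z => ∑' j, b j * z ^ j)
      (∑' j, b j * ((j : ℝ) * y ^ (j-1))) y := by
    apply hasDerivAt_tsum_of_isPreconnected (hb.summable_deriv_aux hR0) isOpen_ball
      (convex_ball _ _).isPreconnected
      (fun j z _ => (hasDerivAt_pow j z).const_mul (b j))
      (fun j z hz => ?_) (mem_ball_self (by positivity)) (hb.summable 0) hmem
    · simp only [mem_ball, dist_zero_right, Real.norm_eq_abs] at hz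
      rw [Real.norm_eq_abs, abs_mul, abs_mul, abs_pow, Nat.abs_cast]
      apply mul_le_mul_of_nonneg_left _ (abs_nonneg _)
      apply mul_le_mul_of_nonneg_left _ (Nat.cast_nonneg _)
      exact pow_le_pow_left₀ (abs_nonneg z) hz.le _
  have hsum : Summable (fun j => b j * ((j : ℝ) * y ^ (j-1))) := by
    apply Summable.of_norm_bounded (hb.summable_deriv_aux (R := R) hR0)
    intro j
    rw [Real.norm_eq_abs, abs_mul, abs_mul, abs_pow, Nat.abs_cast]
    apply mul_le_mul_of_nonneg_left _ (abs_nonneg _)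
    apply mul_le_mul_of_nonneg_left _ (Nat.cast_nonneg _)
    apply pow_le_pow_left₀ (abs_nonneg y)
    simp only [hRdef]; linarith
  have : (∑' j, b j * ((j : ℝ) * y ^ (j-1))) = ∑' j, sh b j * y ^ j := by
    rw [hsum.tsum_eq_zero_add]
    simp only [Nat.cast_zero, pow_zero, zero_mul, mul_zero, zero_add]
    apply tsum_congr
    intro n
    rw [sh]
    push_cast
    ring
  rwa [this] at key


/-- The coefficients of the power series expansion. -/
def a (l : ℕ) : ℕ → ℝ := fun j =>
  (-1)^j * 2^(j+l) / (2 * (j.factorial : ℝ) * ((j + 2*l + 1).factorial : ℝ))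

lemma abs_a (l j : ℕ) :
    |a l j| = 2^(j+l) / (2 * (j.factorial : ℝ) * ((j + 2*l + 1).factorial : ℝ)) := by
  rw [a, abs_div, abs_mul, abs_pow, abs_neg, abs_one, one_pow, one_mul, abs_pow,
    abs_of_pos (by norm_num : (0:ℝ) < 2), abs_of_pos (by positivity)]

lemma rec_a (l j : ℕ) :
    ((j:ℝ)+1) * ((j:ℝ) + 2*l + 2) * a l (j+1) = -2 * a l j := by
  have hidx : j + 1 + 2*l + 1 = (j + 2*l + 1) + 1 := by omega
  have hpow : j + 1 + l = (j + l) + 1 := by omega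
  rw [a, a, hidx, hpow, Nat.factorial_succ, Nat.factorial_succ, pow_succ]
  have h1 : ((j.factorial : ℝ)) ≠ 0 := Nat.cast_ne_zero.mpr j.factorial_ne_zero
  have h2 : (((j + 2*l + 1).factorial : ℝ)) ≠ 0 := Nat.cast_ne_zero.mpr (Nat.factorial_ne_zero _)
  push_cast
  field_simp
  ring

lemma good_a (l : ℕ) : Good (a l) := by
  intro j
  have hrec := rec_a l j
  have hpos : (0:ℝ) < ((j:ℝ)+1) * ((j:ℝ) + 2*l + 2) := by positivity
  have ha1 : a l (j+1) = -2 * a l j / (((j:ℝ)+1) * ((j:ℝ) + 2*l + 2)) := by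
    field_simp
    linarith [hrec]
  rw [ha1, abs_div, abs_mul, abs_of_pos hpos]
  have habs : |(-2:ℝ)| = 2 := by norm_num
  rw [habs, div_le_div_iff₀ hpos (by positivity)]
  have hj : (0:ℝ) ≤ (j:ℝ) := Nat.cast_nonneg j
  have hl : (0:ℝ) ≤ (l:ℝ) := Nat.cast_nonneg l
  nlinarith [abs_nonneg (a l j), mul_nonneg (abs_nonneg (a l j)) hj,
    mul_nonneg (abs_nonneg (a l j)) hl,
    mul_nonneg (mul_nonneg (abs_nonneg (a l j)) hj) hl,
    mul_nonneg (mul_nonneg (abs_nonneg (a l j)) hj) hj]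

/-- The function `g`. -/
def gg (l : ℕ) : ℝ → ℝ := fun r => ∑' j, a l j * r ^ j
def gg1 (l : ℕ) : ℝ → ℝ := fun r => ∑' j, sh (a l) j * r ^ j
def gg2 (l : ℕ) : ℝ → ℝ := fun r => ∑' j, sh (sh (a l)) j * r ^ j

lemma hasDerivAt_gg (l : ℕ) (y : ℝ) : HasDerivAt (gg l) (gg1 l y) y :=
  (good_a l).hasDerivAt y

lemma hasDerivAt_gg1 (l : ℕ) (y : ℝ) : HasDerivAt (gg1 l) (gg2 l y) y :=
  (good_a l).sh_good.hasDerivAt y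

lemma ode_gg (l : ℕ) (r : ℝ) :
    r * gg2 l r + (2*(l:ℝ)+2) * gg1 l r + 2 * gg l r = 0 := by
  have hga := good_a l
  have hg1 := hga.sh_good
  have hg2 := hg1.sh_good
  -- shift the second-derivative series
  set e : ℕ → ℝ := fun j => (j:ℝ) * sh (a l) j * r ^ j with he
  have hesum : Summable e := by
    apply (summable_nat_add_iff 1).mp
    have : (fun n : ℕ => e (n+1)) = fun n : ℕ => r * (sh (sh (a l)) n * r ^ n) := by
      funext n
      simp only [he, sh]
      push_cast
      ring
    rw [this]
    exact (hg2.summable r).mul_left r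
  have h2 : r * gg2 l r = ∑' j, e j := by
    rw [gg2, ← tsum_mul_left, hesum.tsum_eq_zero_add]
    have he0 : e 0 = 0 := by simp [he]
    rw [he0, zero_add]
    apply tsum_congr
    intro n
    simp only [he, sh]
    push_cast
    ring
  have h1 : (2*(l:ℝ)+2) * gg1 l r = ∑' j, (2*(l:ℝ)+2) * (sh (a l) j * r ^ j) := by
    rw [gg1, ← tsum_mul_left]
  have h0 : 2 * gg l r = ∑' j, 2 * (a l j * r ^ j) := by
    rw [gg, ← tsum_mul_left]
  rw [h2, h1, h0]
  rw [← Summable.tsum_add hesum ((hg1.summable r).mul_left _),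
    ← Summable.tsum_add (hesum.add ((hg1.summable r).mul_left _)) ((hga.summable r).mul_left _)]
  have : ∀ j : ℕ, e j + (2*(l:ℝ)+2) * (sh (a l) j * r ^ j) + 2 * (a l j * r ^ j) = 0 := by
    intro j
    simp only [he, sh]
    linear_combination (r ^ j) * rec_a l j
  simp only [this, tsum_zero]

/-- Link with the Bessel expression. -/
lemma bessel_eq_gg (l : ℕ) {r : ℝ} (hr : 0 < r) :
    (∑' j : ℕ, (-1 : ℝ) ^ j / ((Nat.factorial j) * (Nat.factorial (j + (2*l+1)))) *
      (Real.sqrt (8*r) / 2) ^ (2 * j + (2*l+1))) / (Real.sqrt (8*r) * r ^ l) = gg l r := by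
  set x := Real.sqrt (8*r) with hx
  have hx2 : x ^ 2 = 8 * r := Real.sq_sqrt (by linarith)
  have hxpos : 0 < x := Real.sqrt_pos.mpr (by linarith)
  rw [gg, ← tsum_div_const]
  apply tsum_congr
  intro j
  have hidx : j + (2*l+1) = j + 2*l + 1 := by omega
  have hexp : 2*j + (2*l+1) = 2*(j+l) + 1 := by omega
  rw [hidx, hexp, pow_succ, pow_mul]
  have hq : (x/2)^2 = 2 * r := by
    rw [div_pow, hx2]; linarith
  rw [hq, mul_pow, a]
  have h1 : ((j.factorial : ℝ)) ≠ 0 := Nat.cast_ne_zero.mpr j.factorial_ne_zero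
  have h2 : (((j + 2*l + 1).factorial : ℝ)) ≠ 0 := Nat.cast_ne_zero.mpr (Nat.factorial_ne_zero _)
  have hrl : r ^ l ≠ 0 := by positivity
  have hx0 : x ≠ 0 := ne_of_gt hxpos
  field_simp
  ring

lemma continuous_gg (l : ℕ) : Continuous (gg l) := by
  rw [continuous_iff_continuousAt]
  intro y
  exact (hasDerivAt_gg l y).continuousAt

end BA


section Helpers

lemma hasFDerivAt_norm' {y : R3} (hy : y ≠ 0) :
    HasFDerivAt (fun z : R3 => ‖z‖) (‖y‖⁻¹ • innerSL ℝ y) y := by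
  have hsq : HasFDerivAt (fun z : R3 => ‖z‖ ^ 2) (2 • innerSL ℝ y) y :=
    (hasStrictFDerivAt_norm_sq y).hasFDerivAt
  have hpos : 0 < ‖y‖ := norm_pos_iff.mpr hy
  have hne : ‖y‖ ^ 2 ≠ 0 := by positivity
  have hsqrt := (Real.hasDerivAt_sqrt hne).comp_hasFDerivAt y hsq
  have hfun : (Real.sqrt ∘ fun z : R3 => ‖z‖ ^ 2) = fun z : R3 => ‖z‖ := by
    funext z; simp [Function.comp, Real.sqrt_sq (norm_nonneg z)]
  rw [hfun] at hsqrt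
  refine hsqrt.congr_fderiv ?_
  rw [Real.sqrt_sq (norm_nonneg y)]
  ext v
  simp only [ContinuousLinearMap.coe_smul', Pi.smul_apply, smul_eq_mul,
    ContinuousLinearMap.smul_apply, nsmul_eq_mul, Nat.cast_ofNat]
  field_simp

end Helpers

set_option maxHeartbeats 1000000 in
/-- For any `l ≥ 0` and any complex-valued harmonic homogeneous polynomial `H` of degree `l`
on ℝ³ (characterized as a smooth, harmonic function homogeneous of degree `l`), the function
`u(x) = (J_{2l+1}(√(8|x|)) / (√(8|x|) |x|^l)) H(x)` satisfies `Δu + (2/|x|)u = 0` on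
`ℝ³ \ {0}` and extends continuously to all of ℝ³. -/
theorem bessel_harmonic_solves_zero_energy_coulomb
    (l : ℕ) (H : R3 → ℂ) (hsmooth : ContDiff ℝ ∞ H)
    (hharm : ∀ x : R3, lap H x = 0)
    (hhom : ∀ (t : ℝ) (x : R3), H (t • x) = (t : ℂ) ^ l * H x) :
    (∀ x : R3, x ≠ 0 →
      lap (fun y => ((besselJ (2 * l + 1) (Real.sqrt (8 * ‖y‖)) /
            (Real.sqrt (8 * ‖y‖) * ‖y‖ ^ l) : ℝ) : ℂ) * H y) x
        + ((2 / ‖x‖ : ℝ) : ℂ) *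
          (((besselJ (2 * l + 1) (Real.sqrt (8 * ‖x‖)) /
            (Real.sqrt (8 * ‖x‖) * ‖x‖ ^ l) : ℝ) : ℂ) * H x) = 0) ∧
    ∃ v : R3 → ℂ, Continuous v ∧ ∀ x : R3, x ≠ 0 →
      v x = ((besselJ (2 * l + 1) (Real.sqrt (8 * ‖x‖)) /
        (Real.sqrt (8 * ‖x‖) * ‖x‖ ^ l) : ℝ) : ℂ) * H x := by
  classical
  -- the smooth model function
  set u : R3 → ℂ := fun y => ((BA.gg l ‖y‖ : ℝ) : ℂ) * H y with hu_def
  set F : R3 → ℂ := fun y => ((besselJ (2 * l + 1) (Real.sqrt (8 * ‖y‖)) /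
      (Real.sqrt (8 * ‖y‖) * ‖y‖ ^ l) : ℝ) : ℂ) * H y with hF_def
  have hagree : ∀ y : R3, y ≠ 0 → F y = u y := by
    intro y hy
    have hr : 0 < ‖y‖ := norm_pos_iff.mpr hy
    simp only [hF_def, hu_def]
    congr 2
    rw [besselJ]
    exact BA.bessel_eq_gg l hr
  have hHd : Differentiable ℝ H := hsmooth.differentiable (by simp)
  set DH : R3 → R3 →L[ℝ] ℂ := fderiv ℝ H with hDH_def
  have hDHsmooth : ContDiff ℝ ∞ DH := hsmooth.fderiv_right (by simp)
  set e : Fin 3 → R3 := fun i => EuclideanSpace.single i (1:ℝ) with he_def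
  constructor
  · -- the PDE
    intro x hx
    have hr : 0 < ‖x‖ := norm_pos_iff.mpr hx
    have hrne : ‖x‖ ≠ 0 := ne_of_gt hr
    -- derivative of the radial factor
    have hphi : ∀ y : R3, y ≠ 0 → HasFDerivAt (fun z : R3 => ((BA.gg l ‖z‖ : ℝ) : ℂ))
        (Complex.ofRealCLM.comp ((BA.gg1 l ‖y‖) • (‖y‖⁻¹ • innerSL ℝ y))) y := by
      intro y hy
      have h1 : HasFDerivAt (fun z : R3 => BA.gg l ‖z‖)
          ((BA.gg1 l ‖y‖) • (‖y‖⁻¹ • innerSL ℝ y)) y :=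
        (BA.hasDerivAt_gg l ‖y‖).comp_hasFDerivAt y (hasFDerivAt_norm' hy)
      exact Complex.ofRealCLM.hasFDerivAt.comp y h1
    -- derivative of u away from the origin
    have hdu : ∀ y : R3, y ≠ 0 → HasFDerivAt u
        (((BA.gg l ‖y‖ : ℝ) : ℂ) • fderiv ℝ H y + H y •
          (Complex.ofRealCLM.comp ((BA.gg1 l ‖y‖) • (‖y‖⁻¹ • innerSL ℝ y)))) y := by
      intro y hy
      exact (hphi y hy).mul (hHd y).hasFDerivAt
    -- the partial derivatives of u, as explicit functions
    set w : Fin 3 → R3 → ℂ := fun i y =>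
      ((BA.gg l ‖y‖ : ℝ) : ℂ) * fderiv ℝ H y (EuclideanSpace.single i 1)
        + H y * ((BA.gg1 l ‖y‖ * ‖y‖⁻¹ * y i : ℝ) : ℂ) with hw_def
    have hw : ∀ (i : Fin 3), ∀ y : R3, y ≠ 0 →
        fderiv ℝ u y (EuclideanSpace.single i 1) = w i y := by
      intro i y hy
      rw [(hdu y hy).fderiv]
      simp only [hw_def, ContinuousLinearMap.add_apply, ContinuousLinearMap.smul_apply,
        ContinuousLinearMap.coe_comp', Function.comp_apply, Complex.ofRealCLM_apply,
        ContinuousLinearMap.coe_smul', Pi.smul_apply, innerSL_apply_apply, smul_eq_mul,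
        EuclideanSpace.inner_single_right, starRingEnd_apply, star_trivial, one_mul]
      push_cast
      ring
    -- differentiability of the pieces at x
    have hKd : ∀ i : Fin 3, HasFDerivAt (fun y => fderiv ℝ H y (EuclideanSpace.single i 1))
        (fderiv ℝ (fun y => fderiv ℝ H y (EuclideanSpace.single i 1)) x) x := by
      intro i
      have hDi : ContDiff ℝ ∞ (fun y => fderiv ℝ H y (EuclideanSpace.single i 1)) :=
        hDHsmooth.clm_apply contDiff_const
      exact ((hDi.differentiable (by simp)) x).hasFDerivAt
    -- derivative of the coefficient of the second summand of w i
    have hm1 : HasFDerivAt (fun y : R3 => BA.gg1 l ‖y‖ * ‖y‖⁻¹)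
        ((BA.gg2 l ‖x‖ * ‖x‖⁻¹ + BA.gg1 l ‖x‖ * -(‖x‖ ^ 2)⁻¹) • (‖x‖⁻¹ • innerSL ℝ x)) x := by
      have hpsi : HasDerivAt (fun t : ℝ => BA.gg1 l t * t⁻¹)
          (BA.gg2 l ‖x‖ * ‖x‖⁻¹ + BA.gg1 l ‖x‖ * -(‖x‖ ^ 2)⁻¹) ‖x‖ :=
        (BA.hasDerivAt_gg1 l ‖x‖).mul (hasDerivAt_inv hrne)
      exact hpsi.comp_hasFDerivAt x (hasFDerivAt_norm' hx)
    have hproj : ∀ i : Fin 3, HasFDerivAt (fun y : R3 => y i)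
        (EuclideanSpace.proj i : R3 →L[ℝ] ℝ) x := fun i =>
      (EuclideanSpace.proj (𝕜 := ℝ) i).hasFDerivAt
    have hq : ∀ i : Fin 3, HasFDerivAt (fun y : R3 => ((BA.gg1 l ‖y‖ * ‖y‖⁻¹ * y i : ℝ) : ℂ))
        (Complex.ofRealCLM.comp ((BA.gg1 l ‖x‖ * ‖x‖⁻¹) • (EuclideanSpace.proj i : R3 →L[ℝ] ℝ)
          + x i • ((BA.gg2 l ‖x‖ * ‖x‖⁻¹ + BA.gg1 l ‖x‖ * -(‖x‖ ^ 2)⁻¹) •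
            (‖x‖⁻¹ • innerSL ℝ x)))) x := by
      intro i
      exact Complex.ofRealCLM.hasFDerivAt.comp x (hm1.mul (hproj i))
    -- derivative of w i at x
    have hW : ∀ i : Fin 3, HasFDerivAt (w i)
        ((((BA.gg l ‖x‖ : ℝ) : ℂ) • fderiv ℝ (fun y => fderiv ℝ H y
            (EuclideanSpace.single i 1)) x
          + fderiv ℝ H x (EuclideanSpace.single i 1) •
            (Complex.ofRealCLM.comp ((BA.gg1 l ‖x‖) • (‖x‖⁻¹ • innerSL ℝ x))))
        + (H x • (Complex.ofRealCLM.comp ((BA.gg1 l ‖x‖ * ‖x‖⁻¹) •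
              (EuclideanSpace.proj i : R3 →L[ℝ] ℝ)
            + x i • ((BA.gg2 l ‖x‖ * ‖x‖⁻¹ + BA.gg1 l ‖x‖ * -(‖x‖ ^ 2)⁻¹) •
              (‖x‖⁻¹ • innerSL ℝ x))))
          + ((BA.gg1 l ‖x‖ * ‖x‖⁻¹ * x i : ℝ) : ℂ) • fderiv ℝ H x)) x := by
      intro i
      exact ((hphi x hx).mul (hKd i)).add (((hHd x).hasFDerivAt).mul (hq i))
    -- the outer derivative may be computed from w i
    have hmemx : x ∈ ({(0 : R3)}ᶜ : Set R3) := hx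
    have houter : ∀ i : Fin 3,
        fderiv ℝ (fun y => fderiv ℝ F y (EuclideanSpace.single i 1)) x = fderiv ℝ (w i) x := by
      intro i
      apply Filter.EventuallyEq.fderiv_eq
      filter_upwards [isOpen_compl_singleton.mem_nhds hmemx] with y hy
      have hy' : y ≠ 0 := hy
      have hFu : fderiv ℝ F y = fderiv ℝ u y := by
        apply Filter.EventuallyEq.fderiv_eq
        filter_upwards [isOpen_compl_singleton.mem_nhds (show y ∈ ({(0:R3)}ᶜ : Set R3) from hy')]
          with z hz
        exact hagree z hz
      rw [hFu]
      exact hw i y hy'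
    -- value of the second derivatives
    have hval : ∀ i : Fin 3, fderiv ℝ (w i) x (EuclideanSpace.single i 1) =
        (BA.gg l ‖x‖ : ℂ) * (fderiv ℝ (fun y => fderiv ℝ H y (EuclideanSpace.single i 1)) x
            (EuclideanSpace.single i 1))
        + 2 * (BA.gg1 l ‖x‖ : ℂ) * (‖x‖ : ℂ)⁻¹ *
            (((x i : ℝ) : ℂ) * fderiv ℝ H x (EuclideanSpace.single i 1))
        + ((BA.gg2 l ‖x‖ : ℂ) * (‖x‖ : ℂ)⁻¹ - (BA.gg1 l ‖x‖ : ℂ) * ((‖x‖ : ℂ) ^ 2)⁻¹) *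
            (‖x‖ : ℂ)⁻¹ * (((x i : ℝ) : ℂ) ^ 2 * H x)
        + (BA.gg1 l ‖x‖ : ℂ) * (‖x‖ : ℂ)⁻¹ * H x := by
      intro i
      rw [(hW i).fderiv]
      simp only [ContinuousLinearMap.add_apply, ContinuousLinearMap.smul_apply,
        ContinuousLinearMap.coe_comp', Function.comp_apply, Complex.ofRealCLM_apply,
        ContinuousLinearMap.coe_smul', Pi.smul_apply, innerSL_apply_apply, smul_eq_mul,
        EuclideanSpace.inner_single_right, starRingEnd_apply, star_trivial, one_mul,
        PiLp.proj_apply, EuclideanSpace.single_apply, if_pos rfl]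
      push_cast
      ring
    -- Euler's identity
    have heuler : fderiv ℝ H x x = (l : ℂ) * H x := by
      have hsm : HasDerivAt (fun t : ℝ => t • x) ((1:ℝ) • x) 1 := (hasDerivAt_id 1).smul_const x
      have h1 : HasDerivAt (fun t : ℝ => H (t • x)) (fderiv ℝ H ((1:ℝ) • x) ((1:ℝ) • x)) 1 :=
        ((hHd ((1:ℝ) • x)).hasFDerivAt).comp_hasDerivAt 1 hsm
      rw [one_smul] at h1
      have heq : (fun t : ℝ => H (t • x)) = fun t : ℝ => ((t : ℝ) : ℂ) ^ l * H x :=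
        funext fun t => hhom t x
      rw [heq] at h1
      have hp : HasDerivAt (fun z : ℂ => z ^ l) ((l : ℂ) * ((1:ℝ) : ℂ) ^ (l - 1)) (((1:ℝ)) : ℂ) :=
        hasDerivAt_pow l _
      have h2 : HasDerivAt (fun t : ℝ => ((t : ℝ) : ℂ) ^ l) ((l : ℂ) * ((1:ℝ) : ℂ) ^ (l - 1)) 1 :=
        hp.comp_ofReal
      have h3 := h2.mul_const (H x)
      have h4 := h1.unique h3
      rw [h4]
      norm_num
    -- the three sums
    have hsumK : ∑ i : Fin 3, (fderiv ℝ (fun y => fderiv ℝ H y (EuclideanSpace.single i 1)) x)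
        (EuclideanSpace.single i 1) = 0 := by
      have hh := hharm x
      simpa only [lap] using hh
    have hxdecomp : ∑ i : Fin 3, x i • (EuclideanSpace.single i (1:ℝ)) = x := by
      have hb := (EuclideanSpace.basisFun (Fin 3) ℝ).sum_repr x
      simpa [EuclideanSpace.basisFun_apply, EuclideanSpace.basisFun_repr] using hb
    have hsumE : ∑ i : Fin 3, ((x i : ℝ) : ℂ) * fderiv ℝ H x (EuclideanSpace.single i 1)
        = (l : ℂ) * H x := by
      have : ∑ i : Fin 3, ((x i : ℝ) : ℂ) * fderiv ℝ H x (EuclideanSpace.single i 1)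
          = fderiv ℝ H x x := by
        calc ∑ i : Fin 3, ((x i : ℝ) : ℂ) * fderiv ℝ H x (EuclideanSpace.single i 1)
            = ∑ i : Fin 3, fderiv ℝ H x (x i • EuclideanSpace.single i 1) := by
              refine Finset.sum_congr rfl fun i _ => ?_
              rw [_root_.map_smul, Complex.real_smul]
          _ = fderiv ℝ H x (∑ i : Fin 3, x i • EuclideanSpace.single i 1) :=
              (map_sum (fderiv ℝ H x) _ _).symm
          _ = fderiv ℝ H x x := by rw [hxdecomp]
      rw [this, heuler]
    have hsumX : ∑ i : Fin 3, ((x i : ℝ) : ℂ) ^ 2 = ((‖x‖ : ℝ) : ℂ) ^ 2 := by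
      have hre : ∑ i : Fin 3, (x i) ^ 2 = ‖x‖ ^ 2 := by
        have hn := EuclideanSpace.norm_eq x
        rw [hn, Real.sq_sqrt (by positivity)]
        apply Finset.sum_congr rfl
        intro i _
        rw [Real.norm_eq_abs, sq_abs]
      exact_mod_cast congrArg (fun t : ℝ => (t : ℂ)) hre
    -- put everything together
    have hlap : lap F x =
        (BA.gg l ‖x‖ : ℂ) * (∑ i : Fin 3, (fderiv ℝ (fun y => fderiv ℝ H y
            (EuclideanSpace.single i 1)) x) (EuclideanSpace.single i 1))
        + 2 * (BA.gg1 l ‖x‖ : ℂ) * (‖x‖ : ℂ)⁻¹ *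
            (∑ i : Fin 3, ((x i : ℝ) : ℂ) * fderiv ℝ H x (EuclideanSpace.single i 1))
        + ((BA.gg2 l ‖x‖ : ℂ) * (‖x‖ : ℂ)⁻¹ - (BA.gg1 l ‖x‖ : ℂ) * ((‖x‖ : ℂ) ^ 2)⁻¹) *
            (‖x‖ : ℂ)⁻¹ * ((∑ i : Fin 3, ((x i : ℝ) : ℂ) ^ 2) * H x)
        + 3 * ((BA.gg1 l ‖x‖ : ℂ) * (‖x‖ : ℂ)⁻¹ * H x) := by
      calc lap F x = ∑ i : Fin 3, fderiv ℝ (w i) x (EuclideanSpace.single i 1) := by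
            simp only [lap]
            exact Finset.sum_congr rfl fun i _ => by rw [houter i]
        _ = _ := by
            rw [Finset.sum_congr rfl fun i _ => hval i]
            rw [Finset.sum_add_distrib, Finset.sum_add_distrib, Finset.sum_add_distrib]
            rw [← Finset.mul_sum, ← Finset.mul_sum, ← Finset.mul_sum, ← Finset.sum_mul]
            rw [Finset.sum_const]
            simp only [Finset.card_univ, Fintype.card_fin, nsmul_eq_mul, Nat.cast_ofNat]
    have hFx : besselJ (2*l+1) (Real.sqrt (8*‖x‖)) / (Real.sqrt (8*‖x‖) * ‖x‖ ^ l)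
        = BA.gg l ‖x‖ := by
      rw [besselJ]; exact BA.bessel_eq_gg l hr
    rw [hlap, hsumK, hsumE, hsumX, hFx]
    have hodeC : ((‖x‖ : ℝ) : ℂ) * (BA.gg2 l ‖x‖ : ℂ) + (2 * (l : ℂ) + 2) * (BA.gg1 l ‖x‖ : ℂ)
        + 2 * (BA.gg l ‖x‖ : ℂ) = 0 := by
      exact_mod_cast BA.ode_gg l ‖x‖
    have hrC : ((‖x‖ : ℝ) : ℂ) ≠ 0 := by exact_mod_cast hrne
    clear hlap hsumK hsumE hsumX hFx hW hq hval hw hdu hphi houter hKd hm1 hproj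
      hxdecomp heuler hagree hharm hhom hsmooth hHd hDHsmooth hmemx
    clear hw_def w hF_def F hu_def u he_def e hDH_def DH
    push_cast
    field_simp
    have h5 : ((‖x‖ : ℝ) : ℂ)⁻¹ ^ 5 * ((‖x‖ : ℝ) : ℂ) ^ 5 = 1 := by
      rw [← mul_pow, inv_mul_cancel₀ hrC, one_pow]
    linear_combination (H x) * hodeC
  · -- continuity
    refine ⟨u, ?_, fun x hx => (hagree x hx).symm⟩
    have h1 : Continuous fun y : R3 => ((BA.gg l ‖y‖ : ℝ) : ℂ) :=
      Complex.continuous_ofReal.comp ((BA.continuous_gg l).comp continuous_norm)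
    exact h1.mul hsmooth.continuous
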